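/- Let T be a strong Poset-monad such that every morphism f : X → T Y is lax thunkable (T η_Y ∘ f ≤ η_{T Y} ∘ f). Then every such f is lax discardable (T !_Y ∘ f ≤ η_1 ∘ !_X, where ! denotes the unique map to the terminal object) and lax copyable (T⟨id,id⟩ ∘ f ≤ seq_{Y,Y} ∘ ⟨f, f⟩). -/

import Mathlib

open CategoryTheory CategoryTheory.Limits

/-- Functorial action of a strong monad given by its Kleisli extension. -/
noncomputable def Tmap {C : Type*} [Category C] [HasTerminal C] [HasBinaryProducts C]
    (T : C → C) (η : ∀ X : C, X ⟶ T X)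
    (ext : ∀ {W X Y : C}, (W ⨯ X ⟶ T Y) → (W ⨯ T X ⟶ T Y))
    {X Y : C} (f : X ⟶ Y) : T X ⟶ T Y :=
  (prod.leftUnitor (T X)).inv ≫ ext (prod.snd ≫ f ≫ η Y)

/-- Left-to-right sequencing `seq : T X₁ ⨯ T X₂ ⟶ T (X₁ ⨯ X₂)` derived from
the strength (evaluate the left component first, then the right). -/
noncomputable def seqq {C : Type*} [Category C] [HasTerminal C] [HasBinaryProducts C]
    (T : C → C) (η : ∀ X : C, X ⟶ T X)
    (ext : ∀ {W X Y : C}, (W ⨯ X ⟶ T Y) → (W ⨯ T X ⟶ T Y))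
    (X₁ X₂ : C) : T X₁ ⨯ T X₂ ⟶ T (X₁ ⨯ X₂) :=
  (prod.braiding (T X₁) (T X₂)).hom ≫
    ext ((prod.braiding (T X₂) X₁).hom ≫ ext (η (X₁ ⨯ X₂)))


section Aux


variable {C : Type*} [Category C] [HasTerminal C] [HasBinaryProducts C]

noncomputable def klei (T : C → C)
    (ext : ∀ {W X Y : C}, (W ⨯ X ⟶ T Y) → (W ⨯ T X ⟶ T Y))
    {A B : C} (h : A ⟶ T B) : T A ⟶ T B :=
  (prod.leftUnitor (T A)).inv ≫ ext (prod.snd ≫ h)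

lemma snd_klei (T : C → C)
    (ext : ∀ {W X Y : C}, (W ⨯ X ⟶ T Y) → (W ⨯ T X ⟶ T Y))
    {A B : C} (h : A ⟶ T B) :
    (prod.snd : (⊤_ C) ⨯ T A ⟶ T A) ≫ klei T (fun {W X Y} => ext) h
      = ext (prod.snd ≫ h) := by
  have : (prod.snd : (⊤_ C) ⨯ T A ⟶ T A) ≫ (prod.leftUnitor (T A)).inv = 𝟙 _ := by
    apply Limits.prod.hom_ext <;> simp [eq_iff_true_of_subsingleton, prod.lift_snd, prod.lift_snd_assoc]
  rw [klei, ← Category.assoc, this, Category.id_comp]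

lemma klei_unit (T : C → C) (η : ∀ X : C, X ⟶ T X)
    (ext : ∀ {W X Y : C}, (W ⨯ X ⟶ T Y) → (W ⨯ T X ⟶ T Y))
    (law1 : ∀ {W X Y : C} (f : W ⨯ X ⟶ T Y), prod.map (𝟙 W) (η X) ≫ ext f = f)
    {A B : C} (h : A ⟶ T B) : η A ≫ klei T (fun {W X Y} => ext) h = h := by
  have h1 : η A ≫ (prod.leftUnitor (T A)).inv
      = (prod.leftUnitor A).inv ≫ prod.map (𝟙 _) (η A) := by
    apply Limits.prod.hom_ext <;> simp [eq_iff_true_of_subsingleton, prod.lift_snd, prod.lift_snd_assoc]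
  rw [klei, ← Category.assoc, h1, Category.assoc, law1]
  simp [prod.lift_snd_assoc]

/-- naturality of `ext` in the parameter, along the projection `⊤ ⨯ ⊤ ⟶ ⊤`. -/
lemma ext_fst (T : C → C) (η : ∀ X : C, X ⟶ T X)
    (ext : ∀ {W X Y : C}, (W ⨯ X ⟶ T Y) → (W ⨯ T X ⟶ T Y))
    (law1 : ∀ {W X Y : C} (f : W ⨯ X ⟶ T Y), prod.map (𝟙 W) (η X) ≫ ext f = f)
    (law2 : ∀ X : C, ext (prod.snd ≫ η X) = (prod.snd : (⊤_ C) ⨯ T X ⟶ T X))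
    (law3 : ∀ {W' W X Y Z : C} (f : W ⨯ X ⟶ T Y) (g : W' ⨯ Y ⟶ T Z),
      ext ((prod.associator W' W X).hom ≫ prod.map (𝟙 W') f ≫ ext g)
        = (prod.associator W' W (T X)).hom ≫ prod.map (𝟙 W') (ext f) ≫ ext g)
    {X Z : C} (G : (⊤_ C) ⨯ X ⟶ T Z) :
    ext (W := (⊤_ C) ⨯ (⊤_ C)) (X := X) (Y := Z)
      (prod.map (prod.fst : (⊤_ C) ⨯ (⊤_ C) ⟶ ⊤_ C) (𝟙 X) ≫ G)
      = prod.map (prod.fst : (⊤_ C) ⨯ (⊤_ C) ⟶ ⊤_ C) (𝟙 (T X)) ≫ ext G := by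
  have key := law3 (W' := ⊤_ C) (W := ⊤_ C) (X := X) (Y := X) (Z := Z) (prod.snd ≫ η X) G
  have a1 : (prod.associator (⊤_ C) (⊤_ C) X).hom
        ≫ prod.map (𝟙 (⊤_ C)) (prod.snd ≫ η X) ≫ ext G
      = prod.map prod.fst (𝟙 X) ≫ G := by
    have h2 : (prod.associator (⊤_ C) (⊤_ C) X).hom
          ≫ prod.map (𝟙 (⊤_ C)) (prod.snd ≫ η X)
        = prod.map prod.fst (𝟙 X) ≫ prod.map (𝟙 (⊤_ C)) (η X) := by
      apply Limits.prod.hom_ext <;> simp [eq_iff_true_of_subsingleton, prod.lift_snd, prod.lift_snd_assoc]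
    rw [← Category.assoc, h2, Category.assoc, law1]
  have a2 : (prod.associator (⊤_ C) (⊤_ C) (T X)).hom
        ≫ prod.map (𝟙 (⊤_ C)) (prod.snd : (⊤_ C) ⨯ T X ⟶ T X)
      = prod.map prod.fst (𝟙 (T X)) := by
    apply Limits.prod.hom_ext <;> simp [eq_iff_true_of_subsingleton, prod.lift_snd, prod.lift_snd_assoc]
  rw [law2] at key
  have a2' : (prod.associator (⊤_ C) (⊤_ C) (T X)).hom
        ≫ prod.map (𝟙 (⊤_ C)) (prod.snd : (⊤_ C) ⨯ T X ⟶ T X) ≫ ext G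
      = prod.map prod.fst (𝟙 (T X)) ≫ ext G := by
    rw [← Category.assoc, a2]
  rw [a1, a2'] at key
  exact key

lemma klei_comp (T : C → C) (η : ∀ X : C, X ⟶ T X)
    (ext : ∀ {W X Y : C}, (W ⨯ X ⟶ T Y) → (W ⨯ T X ⟶ T Y))
    (law1 : ∀ {W X Y : C} (f : W ⨯ X ⟶ T Y), prod.map (𝟙 W) (η X) ≫ ext f = f)
    (law2 : ∀ X : C, ext (prod.snd ≫ η X) = (prod.snd : (⊤_ C) ⨯ T X ⟶ T X))
    (law3 : ∀ {W' W X Y Z : C} (f : W ⨯ X ⟶ T Y) (g : W' ⨯ Y ⟶ T Z),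
      ext ((prod.associator W' W X).hom ≫ prod.map (𝟙 W') f ≫ ext g)
        = (prod.associator W' W (T X)).hom ≫ prod.map (𝟙 W') (ext f) ≫ ext g)
    {A B D : C} (g : A ⟶ T B) (h : B ⟶ T D) :
    klei T (fun {W X Y} => ext) g ≫ klei T (fun {W X Y} => ext) h
      = klei T (fun {W X Y} => ext) (g ≫ klei T (fun {W X Y} => ext) h) := by
  have key := law3 (W' := ⊤_ C) (W := ⊤_ C) (X := A) (Y := B) (Z := D) (prod.snd ≫ g) (prod.snd ≫ h)
  rw [← snd_klei T (fun {W X Y} => ext) h, ← snd_klei T (fun {W X Y} => ext) g] at key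
  have a1 : (prod.associator (⊤_ C) (⊤_ C) A).hom
        ≫ prod.map (𝟙 (⊤_ C)) (prod.snd ≫ g)
          ≫ (prod.snd ≫ klei T (fun {W X Y} => ext) h)
      = prod.snd ≫ (g ≫ klei T (fun {W X Y} => ext) h) := by
    simp [prod.lift_snd, prod.lift_snd_assoc]
  have a2 : (prod.associator (⊤_ C) (⊤_ C) (T A)).hom
        ≫ prod.map (𝟙 (⊤_ C)) (prod.snd ≫ klei T (fun {W X Y} => ext) g)
          ≫ (prod.snd ≫ klei T (fun {W X Y} => ext) h)
      = prod.snd ≫ klei T (fun {W X Y} => ext) g ≫ klei T (fun {W X Y} => ext) h := by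
    simp [prod.lift_snd, prod.lift_snd_assoc]
  rw [a1, a2] at key
  -- rewrite the LHS of `key` using `ext_fst` and `snd_klei`
  have b1 : (prod.snd ≫ (g ≫ klei T (fun {W X Y} => ext) h)
        : ((⊤_ C) ⨯ (⊤_ C)) ⨯ A ⟶ T D)
      = prod.map (prod.fst : (⊤_ C) ⨯ (⊤_ C) ⟶ ⊤_ C) (𝟙 A)
          ≫ (prod.snd ≫ (g ≫ klei T (fun {W X Y} => ext) h)) := by
    simp
  rw [b1, ext_fst T η (fun {W X Y} => ext) law1 law2 law3,
    ← snd_klei T (fun {W X Y} => ext) (g ≫ klei T (fun {W X Y} => ext) h)] at key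
  simp only [prod.map_snd_assoc, Category.id_comp] at key
  -- key : snd ≫ klei (g ≫ klei h) = snd ≫ klei g ≫ klei h
  have s1 : prod.lift (prod.lift (terminal.from (T A)) (terminal.from (T A))) (𝟙 (T A))
      ≫ (prod.snd : ((⊤_ C) ⨯ (⊤_ C)) ⨯ T A ⟶ T A) = 𝟙 _ := by simp [prod.lift_snd]
  have key3 : (𝟙 (T A)) ≫ klei T (fun {W X Y} => ext) (g ≫ klei T (fun {W X Y} => ext) h)
      = (𝟙 (T A)) ≫ klei T (fun {W X Y} => ext) g ≫ klei T (fun {W X Y} => ext) h := by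
    rw [← s1, Category.assoc, Category.assoc, key]
  simpa using key3.symm

end Aux

lemma eta_seqq {C : Type*} [Category C] [HasTerminal C] [HasBinaryProducts C]
    (T : C → C) (η : ∀ X : C, X ⟶ T X)
    (ext : ∀ {W X Y : C}, (W ⨯ X ⟶ T Y) → (W ⨯ T X ⟶ T Y))
    (law1 : ∀ {W X Y : C} (f : W ⨯ X ⟶ T Y), prod.map (𝟙 W) (η X) ≫ ext f = f)
    (X₁ X₂ : C) :
    prod.map (η X₁) (η X₂) ≫ seqq T η (fun {W X Y} => ext) X₁ X₂ = η (X₁ ⨯ X₂) := by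
  rw [seqq, braid_natural_assoc]
  have h1 : prod.map (η X₂) (η X₁)
      = prod.map (η X₂) (𝟙 X₁) ≫ prod.map (𝟙 (T X₂)) (η X₁) := by simp
  rw [h1, Category.assoc, law1, braid_natural_assoc, law1, prod.symmetry_assoc]

/-- If every Kleisli morphism of a strong `Poset`-monad is lax thunkable
(`T η_Y ∘ f ≤ η_{T Y} ∘ f`), then every morphism `f : X ⟶ T Y` is lax
discardable (`T !_Y ∘ f ≤ η_1 ∘ !_X`) and lax copyable
(`T ⟨id,id⟩ ∘ f ≤ seq_{Y,Y} ∘ ⟨f, f⟩`). -/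
theorem stmt_14 {C : Type*} [Category C] [∀ X Y : C, PartialOrder (X ⟶ Y)]
    [HasTerminal C] [HasBinaryProducts C]
    (compMono : ∀ {X Y Z : C} (f f' : X ⟶ Y) (g g' : Y ⟶ Z),
      f ≤ f' → g ≤ g' → f ≫ g ≤ f' ≫ g')
    (pairMono : ∀ {W X₁ X₂ : C} (f f' : W ⟶ X₁) (g g' : W ⟶ X₂),
      f ≤ f' → g ≤ g' → prod.lift f g ≤ prod.lift f' g')
    (T : C → C) (η : ∀ X : C, X ⟶ T X)
    (ext : ∀ {W X Y : C}, (W ⨯ X ⟶ T Y) → (W ⨯ T X ⟶ T Y))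
    (extMono : ∀ {W X Y : C} (f f' : W ⨯ X ⟶ T Y), f ≤ f' → ext f ≤ ext f')
    (law1 : ∀ {W X Y : C} (f : W ⨯ X ⟶ T Y),
      prod.map (𝟙 W) (η X) ≫ ext f = f)
    (law2 : ∀ X : C,
      ext (prod.snd ≫ η X) = (prod.snd : (⊤_ C) ⨯ T X ⟶ T X))
    (law3 : ∀ {W' W X Y Z : C} (f : W ⨯ X ⟶ T Y) (g : W' ⨯ Y ⟶ T Z),
      ext ((prod.associator W' W X).hom ≫ prod.map (𝟙 W') f ≫ ext g)
        = (prod.associator W' W (T X)).hom ≫ prod.map (𝟙 W') (ext f) ≫ ext g)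
    -- every morphism into a free algebra is lax thunkable
    (thunkable : ∀ {X Y : C} (f : X ⟶ T Y),
      f ≫ Tmap T η (fun {W X Y} => ext) (η Y) ≤ f ≫ η (T Y)) :
    -- lax discardable
    (∀ (X Y : C) (f : X ⟶ T Y),
      f ≫ Tmap T η (fun {W X Y} => ext) (terminal.from Y)
        ≤ terminal.from X ≫ η (⊤_ C)) ∧
    -- lax copyable
    (∀ (X Y : C) (f : X ⟶ T Y),
      f ≫ Tmap T η (fun {W X Y} => ext) (prod.lift (𝟙 Y) (𝟙 Y))
        ≤ prod.lift f f ≫ seqq T η (fun {W X Y} => ext) Y Y) := by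
  have hTmap : ∀ {X Y : C} (f' : X ⟶ Y),
      Tmap T η (fun {W X Y} => ext) f' = klei T (fun {W X Y} => ext) (f' ≫ η Y) := by
    intro X Y f'; rfl
  constructor
  · -- lax discardable
    intro X Y f
    have e1 : klei T (fun {W X Y} => ext) (η Y ≫ η (T Y))
          ≫ klei T (fun {W X Y} => ext) (terminal.from (T Y) ≫ η (⊤_ C))
        = klei T (fun {W X Y} => ext) (terminal.from Y ≫ η (⊤_ C)) := by
      rw [klei_comp T η (fun {W X Y} => ext) law1 law2 law3]
      congr 1
      rw [Category.assoc, klei_unit T η (fun {W X Y} => ext) law1, ← Category.assoc,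
        terminal.comp_from]
    calc f ≫ Tmap T η (fun {W X Y} => ext) (terminal.from Y)
        = (f ≫ Tmap T η (fun {W X Y} => ext) (η Y))
            ≫ klei T (fun {W X Y} => ext) (terminal.from (T Y) ≫ η (⊤_ C)) := by
          rw [hTmap, hTmap, Category.assoc, e1]
      _ ≤ (f ≫ η (T Y)) ≫ klei T (fun {W X Y} => ext) (terminal.from (T Y) ≫ η (⊤_ C)) :=
          compMono _ _ _ _ (thunkable f) (le_refl _)
      _ = terminal.from X ≫ η (⊤_ C) := by
          rw [Category.assoc, klei_unit T η (fun {W X Y} => ext) law1, ← Category.assoc,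
            terminal.comp_from]
  · -- lax copyable
    intro X Y f
    have e2 : klei T (fun {W X Y} => ext) (η Y ≫ η (T Y))
          ≫ klei T (fun {W X Y} => ext)
              (prod.lift (𝟙 (T Y)) (𝟙 (T Y)) ≫ seqq T η (fun {W X Y} => ext) Y Y)
        = klei T (fun {W X Y} => ext) (prod.lift (𝟙 Y) (𝟙 Y) ≫ η (Y ⨯ Y)) := by
      rw [klei_comp T η (fun {W X Y} => ext) law1 law2 law3]
      congr 1
      rw [Category.assoc, klei_unit T η (fun {W X Y} => ext) law1]
      have h3 : η Y ≫ prod.lift (𝟙 (T Y)) (𝟙 (T Y))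
          = prod.lift (𝟙 Y) (𝟙 Y) ≫ prod.map (η Y) (η Y) := by simp
      rw [← Category.assoc, h3, Category.assoc,
        eta_seqq T η (fun {W X Y} => ext) law1]
    calc f ≫ Tmap T η (fun {W X Y} => ext) (prod.lift (𝟙 Y) (𝟙 Y))
        = (f ≫ Tmap T η (fun {W X Y} => ext) (η Y))
            ≫ klei T (fun {W X Y} => ext)
                (prod.lift (𝟙 (T Y)) (𝟙 (T Y)) ≫ seqq T η (fun {W X Y} => ext) Y Y) := by
          rw [hTmap, hTmap, Category.assoc, e2]
      _ ≤ (f ≫ η (T Y)) ≫ klei T (fun {W X Y} => ext)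
            (prod.lift (𝟙 (T Y)) (𝟙 (T Y)) ≫ seqq T η (fun {W X Y} => ext) Y Y) :=
          compMono _ _ _ _ (thunkable f) (le_refl _)
      _ = prod.lift f f ≫ seqq T η (fun {W X Y} => ext) Y Y := by
          rw [Category.assoc, klei_unit T η (fun {W X Y} => ext) law1, ← Category.assoc]
          congr 1
          simp
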